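/- arXiv:2603.25612 — 2 statements merged into one kernel-verified Lean document; each statement's English description precedes it below -/
import Mathlib

section
/- Let f(z) be holomorphic on the closed disk |z - s| ≤ R, non-vanishing at z = s and on the circle |z - s| = R. Then Re(f'(s)/f(s)) = ∑_{|ρ - s| < R} Re(1/(s - ρ) - (s - ρ)/R²) + (1/(πR)) ∫₀^{2π} cos(α)·log|f(s + Re^{iα})| dα, where the sum is over zeros ρ of f in the open disk, counted with multiplicity. -/
section HBJHelpers
open Complex Metric Real Topology Filter

noncomputable section

lemma hbj_analyticAt_deriv {f : ℂ → ℂ} {z : ℂ} (hf : AnalyticAt ℂ f z) :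
    AnalyticAt ℂ (deriv f) z :=
  (AnalyticOnNhd.deriv (fun _ hy => hy : AnalyticOnNhd ℂ f {y | AnalyticAt ℂ f y})) z hf

lemma hbj_intervalIntegral_re {a b : ℝ} (hab : a ≤ b) (f : ℝ → ℂ)
    (hf : IntervalIntegrable f MeasureTheory.volume a b) :
    (∫ x in a..b, f x).re = ∫ x in a..b, (f x).re := by
  rw [intervalIntegral.integral_of_le hab, intervalIntegral.integral_of_le hab]
  have := integral_re (μ := MeasureTheory.volume.restrict (Set.Ioc a b)) (f := f)
    (by exact hf.1)
  simpa [RCLike.re_to_complex] using this.symm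

/-- Lemma A: Schwarz-type formula for the logarithmic derivative at the center. -/
lemma hbj_lemA (g : ℂ → ℂ) (s : ℂ) (R : ℝ) (hR : 0 < R)
    (hg : ∀ z ∈ Metric.closedBall s R, AnalyticAt ℂ g z)
    (hg0 : ∀ z ∈ Metric.closedBall s R, g z ≠ 0) :
    (deriv g s / g s).re
      = (1 / (π * R)) * ∫ α in (0:ℝ)..(2 * π),
          Real.cos α * Real.log (‖g (circleMap s R α)‖) := by
  have hπ : (0:ℝ) < 2 * π := by positivity
  set G : ℂ → ℂ := fun z => deriv g z / g z with hGdef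
  have hGanal : ∀ z ∈ Metric.closedBall s R, AnalyticAt ℂ G z := fun z hz =>
    (hbj_analyticAt_deriv (hg z hz)).div (hg z hz) (hg0 z hz)
  have hGca : ∀ θ : ℝ, ContinuousAt (fun θ : ℝ => G (circleMap s R θ)) θ := by
    intro θ
    exact ((hGanal _ (circleMap_mem_closedBall s hR.le θ)).continuousAt).comp
      (continuous_circleMap s R).continuousAt
  have hGc : Continuous (fun θ : ℝ => G (circleMap s R θ)) :=
    continuous_iff_continuousAt.2 hGca
  -- Cauchy integral formula: ∫ G(γθ) dθ = 2π G s
  have hBint : (∫ θ in (0:ℝ)..(2*π), G (circleMap s R θ)) = (2 * π : ℂ) * G s := by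
    have hdc : DiffContOnCl ℂ G (Metric.ball s R) := by
      constructor
      · exact fun z hz => ((hGanal z (Metric.ball_subset_closedBall hz)).differentiableAt
          ).differentiableWithinAt
      · exact fun z hz => ((hGanal z (closure_ball_subset_closedBall hz)
          ).continuousAt).continuousWithinAt
    have hB := hdc.circleIntegral_sub_inv_smul (Metric.mem_ball_self hR)
    rw [circleIntegral] at hB
    simp only [deriv_circleMap, circleMap_sub_center, smul_eq_mul] at hB
    have : (∫ θ in (0:ℝ)..(2*π), circleMap 0 R θ * I * ((circleMap 0 R θ)⁻¹ * G (circleMap s R θ)))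
        = ∫ θ in (0:ℝ)..(2*π), I * G (circleMap s R θ) := by
      refine intervalIntegral.integral_congr fun θ _ => ?_
      have h0 : circleMap 0 R θ ≠ 0 := by simpa using circleMap_ne_center (c := (0:ℂ)) hR.ne' (θ := θ)
      field_simp
    rw [this, intervalIntegral.integral_const_mul] at hB
    have hI : (I : ℂ) ≠ 0 := I_ne_zero
    have : I * ∫ θ in (0:ℝ)..(2*π), G (circleMap s R θ) = I * ((2*π:ℂ) * G s) := by
      rw [hB]; ring
    exact mul_left_cancel₀ hI this
  -- Cauchy-Goursat: ∫ (γ₀θ)² G(γθ) dθ = 0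
  have hAint : (∫ θ in (0:ℝ)..(2*π), (circleMap 0 R θ)^2 * G (circleMap s R θ)) = 0 := by
    have hA := Complex.circleIntegral_eq_zero_of_differentiable_on_off_countable
      (f := fun z => (z - s) * G z) hR.le Set.countable_empty
      (fun z hz => ((continuousAt_id.sub continuousAt_const).mul
        (hGanal z hz).continuousAt).continuousWithinAt)
      (fun z hz => (differentiableAt_id.sub_const _).mul
        (hGanal z (Metric.ball_subset_closedBall hz.1)).differentiableAt)
    rw [circleIntegral] at hA
    simp only [deriv_circleMap, circleMap_sub_center, smul_eq_mul] at hA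
    have : (∫ θ in (0:ℝ)..(2*π),
        circleMap 0 R θ * I * (circleMap 0 R θ * G (circleMap s R θ)))
        = ∫ θ in (0:ℝ)..(2*π), I * ((circleMap 0 R θ)^2 * G (circleMap s R θ)) := by
      refine intervalIntegral.integral_congr fun θ _ => ?_
      ring
    rw [this, intervalIntegral.integral_const_mul] at hA
    exact (mul_eq_zero.1 hA).resolve_left I_ne_zero
  -- the boundary function and its derivative
  set u : ℝ → ℝ := fun θ => Real.log (‖g (circleMap s R θ)‖) with hudef
  set u' : ℝ → ℝ := fun θ => ((circleMap 0 R θ * I) * G (circleMap s R θ)).re with hu'def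
  have hu : ∀ θ : ℝ, HasDerivAt u (u' θ) θ := by
    intro θ
    have hmem : circleMap s R θ ∈ Metric.closedBall s R := circleMap_mem_closedBall s hR.le θ
    have hgz := hg _ hmem
    have hgz0 := hg0 _ hmem
    have hw : HasDerivAt (fun t => g (circleMap s R t))
        (deriv g (circleMap s R θ) * (circleMap 0 R θ * I)) θ := by
      have h1 := (hgz.differentiableAt).hasDerivAt
      exact h1.comp θ (hasDerivAt_circleMap s R θ)
    set W := g (circleMap s R θ) with hW
    set c := deriv g (circleMap s R θ) * (circleMap 0 R θ * I) with hc
    have hre : HasDerivAt (fun t => (g (circleMap s R t)).re) c.re θ :=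
      Complex.reCLM.hasFDerivAt.comp_hasDerivAt θ hw
    have him : HasDerivAt (fun t => (g (circleMap s R t)).im) c.im θ :=
      Complex.imCLM.hasFDerivAt.comp_hasDerivAt θ hw
    have hns : HasDerivAt (fun t => (g (circleMap s R t)).re^2 + (g (circleMap s R t)).im^2)
        (2*W.re*c.re + 2*W.im*c.im) θ := by
      have h2 := (hre.pow 2).add (him.pow 2)
      convert h2 using 1
      rfl
      rfl
      rfl
      push_cast
      ring
    have hNne : (W.re^2 + W.im^2) ≠ 0 := by
      have : 0 < Complex.normSq W := Complex.normSq_pos.2 hgz0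
      rw [Complex.normSq_apply] at this
      nlinarith [this]
    have hlog := (Real.hasDerivAt_log hNne).comp θ hns
    have hueq : u = fun t =>
        Real.log ((g (circleMap s R t)).re^2 + (g (circleMap s R t)).im^2) / 2 := by
      funext t
      show Real.log (‖g (circleMap s R t)‖) = _
      rw [Complex.norm_def, Real.log_sqrt (Complex.normSq_nonneg _), Complex.normSq_apply]
      ring_nf
    rw [hueq]
    have hfinal := hlog.div_const 2
    convert hfinal using 1
    rfl
    rfl
    rfl
    have hWne : W ≠ 0 := hgz0
    have hGW : (circleMap 0 R θ * I) * G (circleMap s R θ) = c / W := by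
      rw [hGdef]
      simp only []
      rw [hc, hW]
      field_simp
    rw [hu'def]
    simp only []
    rw [hGW, Complex.div_re, Complex.normSq_apply]
    have h1 : W.re * W.re + W.im * W.im ≠ 0 := by simpa [pow_two] using hNne
    field_simp [h1, hNne]
  -- integration by parts
  have hecont : Continuous (fun θ : ℝ => circleMap 0 R θ * I) :=
    (continuous_circleMap 0 R).mul continuous_const
  have hu'cont : Continuous u' := Complex.continuous_re.comp (hecont.mul hGc)
  have hparts := intervalIntegral.integral_mul_deriv_eq_deriv_mul
    (u := u) (u' := u') (v := Real.sin) (v' := Real.cos) (a := 0) (b := 2*π)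
    (fun x _ => hu x) (fun x _ => Real.hasDerivAt_sin x)
    (hu'cont.intervalIntegrable _ _) (Real.continuous_cos.intervalIntegrable _ _)
  rw [Real.sin_two_pi, Real.sin_zero, mul_zero, mul_zero, sub_zero, zero_sub] at hparts
  -- pointwise rewriting of u' θ * sin θ
  have hpt : ∀ θ:ℝ, u' θ * Real.sin θ
      = (-(R/2)) * (G (circleMap s R θ)).re
        + (1/(2*R)) * (((circleMap 0 R θ)^2) * G (circleMap s R θ)).re := by
    intro θ
    have hXre : (circleMap 0 R θ).re = R * Real.cos θ := by
      simp [circleMap]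
    have hXim : (circleMap 0 R θ).im = R * Real.sin θ := by
      simp [circleMap]
    rw [hu'def]
    simp only [Complex.mul_re, Complex.mul_im, Complex.I_re, Complex.I_im, pow_two,
      hXre, hXim]
    have hRne : R ≠ 0 := hR.ne'
    field_simp
    linear_combination
      (-(G (circleMap s R θ)).re) * (Real.sin_sq_add_cos_sq θ)
  have he2G : Continuous (fun θ : ℝ => (circleMap 0 R θ)^2 * G (circleMap s R θ)) :=
    ((continuous_circleMap 0 R).pow 2).mul hGc
  have h1 : ∫ θ in (0:ℝ)..(2*π), (G (circleMap s R θ)).re = 2*π*(G s).re := by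
    rw [← hbj_intervalIntegral_re hπ.le _ (hGc.intervalIntegrable _ _), hBint]
    simp [Complex.mul_re]
  have h2 : ∫ θ in (0:ℝ)..(2*π), ((circleMap 0 R θ)^2 * G (circleMap s R θ)).re = 0 := by
    rw [← hbj_intervalIntegral_re hπ.le _ (he2G.intervalIntegrable _ _), hAint]
    simp
  have hGint : IntervalIntegrable (fun θ : ℝ => (G (circleMap s R θ)).re)
      MeasureTheory.volume 0 (2*π) := by
    exact (Complex.continuous_re.comp hGc).intervalIntegrable _ _
  have hi2 : IntervalIntegrable (fun θ : ℝ => ((circleMap 0 R θ)^2 * G (circleMap s R θ)).re)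
      MeasureTheory.volume 0 (2*π) := by
    exact (Complex.continuous_re.comp he2G).intervalIntegrable _ _
  have hsin : ∫ x in (0:ℝ)..(2*π), u' x * Real.sin x = -(π*R*(G s).re) := by
    rw [intervalIntegral.integral_congr (g := fun θ : ℝ => (-(R/2)) * (G (circleMap s R θ)).re
      + (1/(2*R)) * (((circleMap 0 R θ)^2) * G (circleMap s R θ)).re) (fun θ _ => hpt θ)]
    rw [intervalIntegral.integral_add (hGint.const_mul _) (hi2.const_mul _)]
    rw [intervalIntegral.integral_const_mul, intervalIntegral.integral_const_mul, h1, h2]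
    ring
  have hT : ∫ α in (0:ℝ)..(2*π), Real.cos α * u α = π*R*(G s).re := by
    have hcomm : ∫ α in (0:ℝ)..(2*π), Real.cos α * u α = ∫ α in (0:ℝ)..(2*π), u α * Real.cos α :=
      intervalIntegral.integral_congr (fun θ _ => mul_comm _ _)
    rw [hcomm, hparts, hsin]
    ring
  rw [hT]
  have hπR : π * R ≠ 0 := by positivity
  field_simp
  rfl

/-- Lemma B: the boundary integral for a linear factor with zero inside the disk. -/
lemma hbj_lemB (s ρ : ℂ) (R : ℝ) (hR : 0 < R) (hρ : ρ ∈ Metric.ball s R) (hρs : ρ ≠ s) :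
    (1 / (π * R)) * ∫ α in (0:ℝ)..(2 * π),
        Real.cos α * Real.log (‖circleMap s R α - ρ‖)
      = ((s - ρ) / (R:ℂ)^2).re := by
  have hπ : (0:ℝ) < 2 * π := by positivity
  set w : ℂ := ρ - s with hw
  have hw0 : w ≠ 0 := sub_ne_zero.2 hρs
  have hwa : ‖w‖ < R := by
    rw [Metric.mem_ball, Complex.dist_eq] at hρ
    exact hρ
  have hwapos : 0 < ‖w‖ := norm_pos_iff.2 hw0
  have hcw0 : (starRingEnd ℂ) w ≠ 0 := by simpa using hw0
  set ρstar : ℂ := s + (R:ℂ)^2 / (starRingEnd ℂ) w with hρstar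
  have habsstar : ‖ρstar - s‖ = R^2 / ‖w‖ := by
    rw [hρstar]
    simp [norm_div, norm_pow, Complex.norm_real, abs_of_pos hR, Complex.norm_conj]
  have hg0 : ∀ z ∈ Metric.closedBall s R, z - ρstar ≠ 0 := by
    intro z hz h0
    rw [Metric.mem_closedBall, Complex.dist_eq] at hz
    have hz' : z = ρstar := sub_eq_zero.1 h0
    rw [hz', habsstar] at hz
    rw [div_le_iff₀ hwapos] at hz
    nlinarith
  have hA := hbj_lemA (fun z => z - ρstar) s R hR
    (fun z _ => (analyticAt_id.sub analyticAt_const)) hg0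
  have hderiv : deriv (fun z : ℂ => z - ρstar) s = 1 := by
    simp [deriv_sub_const]
  simp only [hderiv] at hA
  -- key pointwise identity for absolute values on the circle
  have hγ : ∀ α : ℝ, circleMap s R α = s + circleMap 0 R α := by
    intro α; simp [circleMap]
  have hsph : ∀ α : ℝ, circleMap s R α - ρ ≠ 0 := by
    intro α h0
    have h1 : ‖circleMap s R α - s‖ = R := by
      rw [circleMap_sub_center]
      simpa [abs_of_pos hR] using norm_circleMap_zero R α
    have h2 : circleMap s R α = ρ := sub_eq_zero.1 h0
    rw [h2] at h1
    rw [← hw] at h1  -- maybe fails; abs (ρ - s) = R contradicts hwa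
    exact absurd h1 (by rw [← Complex.dist_eq] at *; exact ne_of_lt hwa)
  have hkey : ∀ α : ℝ, ‖circleMap s R α - ρstar‖
      = (R / ‖w‖) * ‖circleMap s R α - ρ‖ := by
    intro α
    set E : ℂ := circleMap 0 R α with hE
    have hEne : E ≠ 0 := by
      rw [hE]; simp [hR.ne']
    have habsE : ‖E‖ = R := by
      rw [hE, norm_circleMap_zero]; exact abs_of_pos hR
    have hEcj : (starRingEnd ℂ) E = (R:ℂ)^2 / E := by
      rw [eq_div_iff hEne]
      rw [mul_comm, Complex.mul_conj]
      norm_cast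
      rw [← Complex.sq_norm, habsE]
    have hid : (starRingEnd ℂ) w * (circleMap s R α - ρstar)
        = -E * ((starRingEnd ℂ) (circleMap s R α - ρ)) := by
      have h1 : circleMap s R α - ρ = E - w := by rw [hγ, hw]; ring
      have h2 : circleMap s R α - ρstar = E - (R:ℂ)^2 / (starRingEnd ℂ) w := by
        rw [hγ, hρstar]; ring
      have hv : (starRingEnd ℂ) (E - w) = (starRingEnd ℂ) E - (starRingEnd ℂ) w :=
        map_sub _ _ _
      rw [h1, h2, hv, hEcj]
      field_simp
      ring
    have := congrArg (‖·‖) hid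
    rw [norm_mul, norm_mul, Complex.norm_conj, Complex.norm_conj, norm_neg, habsE] at this
    field_simp
    linarith [this]
  -- rewrite the integrand in hA
  have hC : Real.log (R / ‖w‖) = Real.log (R / ‖w‖) := rfl
  have hlogint : Continuous fun α : ℝ => Real.log (‖circleMap s R α - ρ‖) := by
    rw [continuous_iff_continuousAt]
    intro α
    have h1 : ContinuousAt (fun α : ℝ => ‖circleMap s R α - ρ‖) α :=
      (continuous_norm.comp ((continuous_circleMap s R).sub continuous_const)).continuousAt
    exact ContinuousAt.comp (g := Real.log)
      (f := fun α : ℝ => ‖circleMap s R α - ρ‖) (x := α)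
      (Real.continuousAt_log (norm_ne_zero_iff.2 (hsph α))) h1
  have hsplit : (∫ α in (0:ℝ)..(2*π),
        Real.cos α * Real.log (‖circleMap s R α - ρstar‖))
      = ∫ α in (0:ℝ)..(2*π), Real.cos α * Real.log (‖circleMap s R α - ρ‖) := by
    have hcongr : ∀ α ∈ Set.uIcc (0:ℝ) (2*π), Real.cos α * Real.log (‖circleMap s R α - ρstar‖)
        = Real.cos α * Real.log (‖circleMap s R α - ρ‖)
          + Real.log (R / ‖w‖) * Real.cos α := by
      intro α _
      rw [hkey α, Real.log_mul (by positivity) (norm_ne_zero_iff.2 (hsph α))]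
      rw [Real.log_div hR.ne' hwapos.ne']
      ring
    have hint1 : IntervalIntegrable
        (fun α : ℝ => Real.cos α * Real.log (‖circleMap s R α - ρ‖))
        MeasureTheory.volume 0 (2*π) :=
      (Real.continuous_cos.mul hlogint).intervalIntegrable _ _
    have hint2 : IntervalIntegrable
        (fun α : ℝ => Real.log (R / ‖w‖) * Real.cos α)
        MeasureTheory.volume 0 (2*π) :=
      (continuous_const.mul Real.continuous_cos).intervalIntegrable _ _
    rw [intervalIntegral.integral_congr hcongr]
    rw [intervalIntegral.integral_add hint1 hint2]
    rw [intervalIntegral.integral_const_mul, integral_cos]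
    simp
  rw [hsplit] at hA
  rw [← hA]
  -- finally compute the real part
  have hfin : (1:ℂ) / (s - ρstar) = (starRingEnd ℂ) ((s - ρ) / (R:ℂ)^2) := by
    have hR2 : ((R:ℂ))^2 ≠ 0 := by
      norm_cast
      positivity
    have h1 : s - ρstar = -((R:ℂ)^2 / (starRingEnd ℂ) w) := by rw [hρstar]; ring
    have h2 : (starRingEnd ℂ) ((s - ρ)/(R:ℂ)^2) = -((starRingEnd ℂ) w)/(R:ℂ)^2 := by
      rw [map_div₀, map_pow, Complex.conj_ofReal]
      congr 1
      rw [← map_neg]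
      congr 1
      rw [hw]; ring
    rw [h1, h2]
    field_simp
  rw [hfin, Complex.conj_re]

/-- The main statement, by induction on the number of zeros. -/
lemma hbj_key (n : ℕ) : ∀ (f : ℂ → ℂ) (s : ℂ) (R : ℝ), 0 < R →
    ∀ (hf : ∀ z ∈ Metric.closedBall s R, AnalyticAt ℂ f z),
    f s ≠ 0 → (∀ z ∈ Metric.sphere s R, f z ≠ 0) →
    ∀ (Z : Multiset ℂ),
    (∀ z (hz : z ∈ Metric.ball s R),
      (Z.count z : ℕ∞) = analyticOrderAt f z) →
    (∀ z ∈ Z, z ∈ Metric.ball s R) → Z.card = n →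
    (deriv f s / f s).re
      = (Z.map (fun ρ => (1 / (s - ρ) - (s - ρ) / (R : ℂ) ^ 2).re)).sum
        + (1 / (π * R)) * ∫ α in (0:ℝ)..(2 * π),
            Real.cos α * Real.log (‖f (circleMap s R α)‖) := by
  induction n with
  | zero =>
    intro f s R hR hf hs hsphere Z hZ hZ' hcard
    have hZ0 : Z = 0 := Multiset.card_eq_zero.1 hcard
    subst hZ0
    have hne : ∀ z ∈ Metric.closedBall s R, f z ≠ 0 := by
      intro z hz
      rcases lt_or_eq_of_le (Metric.mem_closedBall.1 hz) with h | h
      · have hzb : z ∈ Metric.ball s R := Metric.mem_ball.2 h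
        have h0 : analyticOrderAt f z = ((0:ℕ) : ℕ∞) := by
          rw [← hZ z hzb]; simp
        obtain ⟨g, hg, hg0, hfg⟩ :=
          ((hf z (Metric.ball_subset_closedBall hzb)).analyticOrderAt_eq_natCast (n := 0)).mp h0
        have h2 : f z = g z := by simpa [smul_eq_mul] using hfg.self_of_nhds
        rw [h2]; exact hg0
      · exact hsphere z (Metric.mem_sphere.2 h)
    rw [hbj_lemA f s R hR hf hne]
    simp
  | succ n ih =>
    intro f s R hR hf hs hsphere Z hZ hZ' hcard
    have hZpos : 0 < Multiset.card Z := by rw [hcard]; exact Nat.succ_pos n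
    obtain ⟨ρ, hρZ⟩ := Multiset.card_pos_iff_exists_mem.1 hZpos
    have hρball : ρ ∈ Metric.ball s R := hZ' ρ hρZ
    have hsball : s ∈ Metric.ball s R := Metric.mem_ball_self hR
    have hρs : ρ ≠ s := by
      intro h
      subst h
      have hcount : (0:ℕ∞) < (Z.count ρ : ℕ∞) := by
        exact_mod_cast Multiset.count_pos.2 hρZ
      have hfρ := hf ρ (Metric.ball_subset_closedBall hρball)
      have h0 : analyticOrderAt f ρ = ((0:ℕ) : ℕ∞) :=
        (hfρ.analyticOrderAt_eq_natCast (n := 0)).mpr ⟨f, hfρ, hs, by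
          filter_upwards with z
          simp⟩
      rw [hZ ρ hρball, h0] at hcount
      simp at hcount
    have hsρ : s - ρ ≠ 0 := sub_ne_zero.2 (Ne.symm hρs)
    set n₀ : ℕ := Z.count ρ with hn₀def
    have hn₀pos : 0 < n₀ := Multiset.count_pos.2 hρZ
    have horder : analyticOrderAt f ρ = (n₀ : ℕ∞) :=
      (hZ ρ hρball).symm
    obtain ⟨g, hganal, hg0, hfg⟩ :=
      ((hf ρ (Metric.ball_subset_closedBall hρball)).analyticOrderAt_eq_natCast (n := n₀)).mp horder
    set f1 : ℂ → ℂ :=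
      Function.update (fun z => (z - ρ)⁻¹ * f z) ρ ((ρ - ρ)^(n₀-1) * g ρ) with hf1def
    have hf1ρnbhd : ∀ᶠ z in 𝓝 ρ, f1 z = (z - ρ)^(n₀-1) * g z := by
      filter_upwards [hfg] with z hz
      by_cases h : z = ρ
      · subst h
        simp [hf1def, Function.update_self]
      · rw [hf1def, Function.update_of_ne h]
        simp only [smul_eq_mul] at hz
        rw [hz]
        have hzρ : z - ρ ≠ 0 := sub_ne_zero.2 h
        have hsucc : n₀ = (n₀ - 1) + 1 := (Nat.succ_pred_eq_of_pos hn₀pos).symm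
        rw [hsucc, pow_succ]
        field_simp
        ring
        rw [Nat.add_sub_cancel_left]
    have heq : ∀ z, f z = (z - ρ) * f1 z := by
      intro z
      by_cases h : z = ρ
      · have hfz : f z = 0 := by
          rw [h]
          have h2 := hfg.self_of_nhds
          simpa [zero_pow hn₀pos.ne', smul_eq_mul] using h2
        rw [hfz, h, sub_self, zero_mul]
      · rw [hf1def, Function.update_of_ne h]
        have hzρ : z - ρ ≠ 0 := sub_ne_zero.2 h
        field_simp
    have hf1anal : ∀ z ∈ Metric.closedBall s R, AnalyticAt ℂ f1 z := by
      intro z hz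
      by_cases h : z = ρ
      · have h2 : AnalyticAt ℂ f1 ρ :=
          (((analyticAt_id.sub analyticAt_const).pow _).mul hganal).congr
            (Filter.EventuallyEq.symm hf1ρnbhd)
        rw [h]; exact h2
      · have hev : ∀ᶠ w in 𝓝 z, (w - ρ)⁻¹ * f w = f1 w := by
          filter_upwards [isOpen_ne.mem_nhds h] with w hw
          rw [hf1def, Function.update_of_ne hw]
        exact (((analyticAt_id.sub analyticAt_const).inv (sub_ne_zero.2 h)).mul
          (hf z hz)).congr hev
    have hf1s : f1 s ≠ 0 := fun h0 => hs (by rw [heq s, h0, mul_zero])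
    have hf1sphere : ∀ z ∈ Metric.sphere s R, f1 z ≠ 0 :=
      fun z hz h0 => hsphere z hz (by rw [heq z, h0, mul_zero])
    have hZcount : ∀ z (hz : z ∈ Metric.ball s R),
        (((Z.erase ρ).count z : ℕ) : ℕ∞)
          = analyticOrderAt f1 z := by
      intro z hz
      by_cases h : z = ρ
      · subst h
        rw [Multiset.count_erase_self]
        have hf1z := hf1anal z (Metric.ball_subset_closedBall hz)
        have hor : analyticOrderAt f1 z
            = ((n₀ - 1 : ℕ) : ℕ∞) :=
          hf1z.analyticOrderAt_eq_natCast.mpr ⟨g, hganal, hg0, by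
            filter_upwards [hf1ρnbhd] with w hw
            rw [hw]
            simp [smul_eq_mul]⟩
        rw [hor]
      · rw [Multiset.count_erase_of_ne h]
        obtain ⟨gz, hgzanal, hgz0, hfgz⟩ :=
          ((hf z (Metric.ball_subset_closedBall hz)).analyticOrderAt_eq_natCast (n := Z.count z)).mp
            ((hZ z hz).symm)
        have hev : ∀ᶠ w in 𝓝 z, f1 w = (w - z)^(Z.count z) * ((w - ρ)⁻¹ * gz w) := by
          filter_upwards [hfgz, isOpen_ne.mem_nhds h] with w hw1 hw2
          rw [hf1def, Function.update_of_ne hw2]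
          simp only [smul_eq_mul] at hw1
          rw [hw1]
          ring
        have hf1z := hf1anal z (Metric.ball_subset_closedBall hz)
        have hor : analyticOrderAt f1 z
            = ((Z.count z : ℕ) : ℕ∞) :=
          hf1z.analyticOrderAt_eq_natCast.mpr
            ⟨fun w => (w - ρ)⁻¹ * gz w,
             ((analyticAt_id.sub analyticAt_const).inv (sub_ne_zero.2 h)).mul hgzanal,
             mul_ne_zero (inv_ne_zero (sub_ne_zero.2 h)) hgz0,
             by filter_upwards [hev] with w hw; rw [hw]; simp [smul_eq_mul]⟩
        rw [hor]
    have hZ'e : ∀ z ∈ Z.erase ρ, z ∈ Metric.ball s R :=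
      fun z hz => hZ' z (Multiset.mem_of_mem_erase hz)
    have hcarde : (Z.erase ρ).card = n := by
      rw [Multiset.card_erase_of_mem hρZ, hcard]
      rfl
    have hIH := ih f1 s R hR hf1anal hf1s hf1sphere (Z.erase ρ) hZcount hZ'e hcarde
    -- logarithmic derivative splits
    have hder : deriv f s = f1 s + (s - ρ) * deriv f1 s := by
      have h1 : HasDerivAt f1 (deriv f1 s) s :=
        ((hf1anal s (Metric.ball_subset_closedBall hsball)).differentiableAt).hasDerivAt
      have h2 : HasDerivAt (fun z => (z - ρ) * f1 z) (1 * f1 s + (s - ρ) * deriv f1 s) s :=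
        (((hasDerivAt_id s).sub_const ρ)).mul h1
      have h3 : HasDerivAt f (1 * f1 s + (s - ρ) * deriv f1 s) s :=
        h2.congr_of_eventuallyEq (Filter.Eventually.of_forall heq)
      rw [h3.deriv]
      ring
    have hquot : deriv f s / f s = 1 / (s - ρ) + deriv f1 s / f1 s := by
      rw [hder, heq s]
      field_simp
    -- integral splits
    have hsph : ∀ α : ℝ, circleMap s R α - ρ ≠ 0 := by
      intro α h0
      have h1 : ‖circleMap s R α - s‖ = R := by
        rw [circleMap_sub_center]
        simpa [abs_of_pos hR] using norm_circleMap_zero R α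
      have h2 : circleMap s R α = ρ := sub_eq_zero.1 h0
      rw [h2, ← Complex.dist_eq] at h1
      rw [Metric.mem_ball] at hρball
      exact absurd h1 (ne_of_lt hρball)
    have hl1 : Continuous fun α : ℝ => Real.log (‖circleMap s R α - ρ‖) := by
      rw [continuous_iff_continuousAt]
      intro α
      have h1 : ContinuousAt (fun α : ℝ => ‖circleMap s R α - ρ‖) α :=
        (continuous_norm.comp
          ((continuous_circleMap s R).sub continuous_const)).continuousAt
      exact ContinuousAt.comp (g := Real.log)
        (f := fun α : ℝ => ‖circleMap s R α - ρ‖) (x := α)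
        (Real.continuousAt_log (norm_ne_zero_iff.2 (hsph α))) h1
    have hl2 : Continuous fun α : ℝ => Real.log (‖f1 (circleMap s R α)‖) := by
      rw [continuous_iff_continuousAt]
      intro α
      have hmem := circleMap_mem_closedBall s hR.le α
      have h1 : ContinuousAt (fun α : ℝ => ‖f1 (circleMap s R α)‖) α :=
        (continuous_norm.continuousAt.comp
          (((hf1anal _ hmem).continuousAt).comp (continuous_circleMap s R).continuousAt))
      have hne0 : ‖f1 (circleMap s R α)‖ ≠ 0 :=
        norm_ne_zero_iff.2
          (hf1sphere _ (circleMap_mem_sphere s hR.le α))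
      exact ContinuousAt.comp (g := Real.log)
        (f := fun α : ℝ => ‖f1 (circleMap s R α)‖) (x := α)
        (Real.continuousAt_log hne0) h1
    have hsplitint : (∫ α in (0:ℝ)..(2*π),
          Real.cos α * Real.log (‖f (circleMap s R α)‖))
        = (∫ α in (0:ℝ)..(2*π), Real.cos α * Real.log (‖circleMap s R α - ρ‖))
          + ∫ α in (0:ℝ)..(2*π), Real.cos α * Real.log (‖f1 (circleMap s R α)‖) := by
      have hcongr : ∀ α ∈ Set.uIcc (0:ℝ) (2*π),
          Real.cos α * Real.log (‖f (circleMap s R α)‖)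
          = Real.cos α * Real.log (‖circleMap s R α - ρ‖)
            + Real.cos α * Real.log (‖f1 (circleMap s R α)‖) := by
        intro α _
        rw [heq (circleMap s R α), norm_mul, Real.log_mul
          (norm_ne_zero_iff.2 (hsph α))
          (norm_ne_zero_iff.2 (hf1sphere _ (circleMap_mem_sphere s hR.le α)))]
        ring
      rw [intervalIntegral.integral_congr hcongr]
      exact intervalIntegral.integral_add
        ((Real.continuous_cos.mul hl1).intervalIntegrable _ _)
        ((Real.continuous_cos.mul hl2).intervalIntegrable _ _)
    have hB := hbj_lemB s ρ R hR hρball hρs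
    have hcons : Z = ρ ::ₘ Z.erase ρ := (Multiset.cons_erase hρZ).symm
    rw [hcons, Multiset.map_cons, Multiset.sum_cons, hsplitint, hquot, Complex.add_re,
      Complex.sub_re, hIH, mul_add]
    have h1re : ((1:ℂ) / (s - ρ)).re = ((1:ℂ) / (s - ρ)).re := rfl
    linarith [hB]

end
end HBJHelpers

open Complex Real in
/-- Heath-Brown's Jensen-type formula. `Z` is the multiset of zeros of `f` in the
open disk `|z - s| < R`, counted with multiplicity (i.e. the multiplicity of each
`z` in `Z` equals the order of vanishing of `f` at `z`). -/
theorem heath_brown_jensen (f : ℂ → ℂ) (s : ℂ) (R : ℝ) (hR : 0 < R)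
    (hf : ∀ z ∈ Metric.closedBall s R, AnalyticAt ℂ f z)
    (hs : f s ≠ 0)
    (hsphere : ∀ z ∈ Metric.sphere s R, f z ≠ 0)
    (Z : Multiset ℂ)
    (hZ : ∀ z (hz : z ∈ Metric.ball s R),
      (Z.count z : ℕ∞) = analyticOrderAt f z)
    (hZ' : ∀ z ∈ Z, z ∈ Metric.ball s R) :
    (deriv f s / f s).re
      = (Z.map (fun ρ => (1 / (s - ρ) - (s - ρ) / (R : ℂ) ^ 2).re)).sum
        + (1 / (π * R)) * ∫ α in (0:ℝ)..(2 * π),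
            Real.cos α * Real.log (‖f (s + R * Complex.exp (α * I))‖) := by
  have h := hbj_key (Multiset.card Z) f s R hR hf hs hsphere Z hZ hZ' rfl
  simpa [circleMap] using h
end

section
/- For any real N ≥ 2 and any positive integer m, ∑_{N < n ≤ 2N} τ(n)²·τ_m(n) ≪_m N·(log N)^{4m-1}, where τ is the divisor function and τ_m the m-fold divisor function. -/
set_option maxHeartbeats 1600000

open Finset ArithmeticFunction
open scoped ArithmeticFunction.zeta

/-- The `m`-fold divisor function: the number of ways to write `n` as an ordered
product of `m` positive integers. -/
def tauM (m n : ℕ) : ℕ :=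
  ((Fintype.piFinset fun _ : Fin m => Finset.Icc 1 n).filter
    (fun d => ∏ i, d i = n)).card

lemma facts_eq (k d N : ℕ) (hd : 1 ≤ d) (hdN : d ≤ N) :
    ((Fintype.piFinset fun _ : Fin k => Finset.Icc 1 N).filter
      (fun f => ∏ i, f i = d)).card = tauM k d := by
  unfold tauM
  congr 1
  ext f
  simp only [mem_filter, Fintype.mem_piFinset, mem_Icc]
  constructor
  · rintro ⟨h1, h2⟩
    refine ⟨fun i => ⟨(h1 i).1, ?_⟩, h2⟩
    exact Nat.le_of_dvd hd (h2 ▸ Finset.dvd_prod_of_mem f (mem_univ i))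
  · rintro ⟨h1, h2⟩
    exact ⟨fun i => ⟨(h1 i).1, le_trans (h1 i).2 hdN⟩, h2⟩

lemma tauM_succ (k n : ℕ) (hn : 1 ≤ n) :
    tauM (k+1) n = ∑ p ∈ n.divisorsAntidiagonal, tauM k p.2 := by
  conv_lhs => rw [tauM]
  rw [Finset.card_eq_sum_card_fiberwise
    (f := fun f : Fin (k+1) → ℕ => ((f 0, ∏ i : Fin k, f i.succ) : ℕ × ℕ))
    (t := n.divisorsAntidiagonal) ?memt]
  case memt =>
    intro f hf
    simp only [Finset.mem_coe, mem_filter, Fintype.mem_piFinset, mem_Icc] at hf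
    obtain ⟨hbox, hprod⟩ := hf
    rw [Finset.mem_coe, Nat.mem_divisorsAntidiagonal]
    constructor
    · rw [← hprod, Fin.prod_univ_succ]
    · omega
  refine Finset.sum_congr rfl fun p hp => ?_
  obtain ⟨hpn, hn0⟩ := Nat.mem_divisorsAntidiagonal.mp hp
  have hp2 : 1 ≤ p.2 := Nat.pos_of_ne_zero fun h => by simp [h] at hpn; omega
  have hp2n : p.2 ≤ n := Nat.le_of_dvd hn ⟨p.1, by rw [← hpn]; ring⟩
  have hp1 : 1 ≤ p.1 := Nat.pos_of_ne_zero fun h => by simp [h] at hpn; omega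
  have hp1n : p.1 ≤ n := Nat.le_of_dvd hn ⟨p.2, hpn.symm⟩
  rw [← facts_eq k p.2 n hp2 hp2n]
  apply Finset.card_nbij' (i := fun f => Fin.tail f) (j := fun g => Fin.cons p.1 g)
  · intro f hf
    simp only [Finset.mem_coe, mem_filter, Fintype.mem_piFinset] at hf ⊢
    obtain ⟨⟨hbox, hprod⟩, hfib⟩ := hf
    have := congrArg Prod.snd hfib
    simp only at this
    exact ⟨fun i => hbox _, this⟩
  · intro g hg
    simp only [Finset.mem_coe, mem_filter, Fintype.mem_piFinset, mem_Icc] at hg ⊢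
    obtain ⟨hbox, hprod⟩ := hg
    refine ⟨⟨fun i => ?_, ?_⟩, ?_⟩
    · induction i using Fin.cases with
      | zero => simp; omega
      | succ j =>
        have := hbox j
        simp only [Fin.cons_succ]
        omega
    · rw [Fin.prod_univ_succ]
      simp only [Fin.cons_zero, Fin.cons_succ]
      rw [hprod, hpn]
    · simp only [Fin.cons_zero, Fin.cons_succ]
      rw [hprod]
  · intro f hf
    simp only [Finset.mem_coe, mem_filter] at hf
    have := congrArg Prod.fst hf.2
    simp only at this
    rw [← this]
    exact (Fin.cons_self_tail f)
  · intro g hg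
    exact Fin.tail_cons _ _

lemma tauM_eq_zeta_pow (k : ℕ) : ∀ n, 1 ≤ n →
    tauM k n = ((ζ : ArithmeticFunction ℕ) ^ k) n := by
  induction k with
  | zero =>
    intro n hn
    rw [pow_zero]
    unfold tauM
    rcases eq_or_lt_of_le hn with h | h
    · rw [← h]
      rw [ArithmeticFunction.one_one]
      rw [Finset.card_eq_one]
      refine ⟨fun _ => 1, ?_⟩
      ext f
      simp only [mem_filter, Fintype.mem_piFinset, mem_Icc, mem_singleton]
      constructor
      · rintro ⟨h1, h2⟩
        funext i
        have := h1 i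
        omega
      · rintro rfl
        simp
    · rw [ArithmeticFunction.one_apply_ne (by omega)]
      rw [Finset.card_eq_zero]
      ext f
      simp only [mem_filter, Fintype.mem_piFinset, mem_Icc, Finset.notMem_empty, iff_false]
      rintro ⟨h1, h2⟩
      simp at h2
      omega
  | succ k ih =>
    intro n hn
    rw [tauM_succ k n hn, pow_succ', ArithmeticFunction.mul_apply]
    refine Finset.sum_congr rfl fun p hp => ?_
    obtain ⟨hpn, hn0⟩ := Nat.mem_divisorsAntidiagonal.mp hp
    have hp1 : p.1 ≠ 0 := fun h => by simp [h] at hpn; omega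
    have hp2 : 1 ≤ p.2 := Nat.pos_of_ne_zero fun h => by simp [h] at hpn; omega
    rw [zeta_apply_ne hp1, one_mul, ih p.2 hp2]

lemma tauM_add (j k n : ℕ) (hn : 1 ≤ n) :
    tauM (j + k) n = ∑ p ∈ n.divisorsAntidiagonal, tauM j p.1 * tauM k p.2 := by
  rw [tauM_eq_zeta_pow _ n hn, pow_add, ArithmeticFunction.mul_apply]
  refine Finset.sum_congr rfl fun p hp => ?_
  obtain ⟨hpn, hn0⟩ := Nat.mem_divisorsAntidiagonal.mp hp
  have hp1 : 1 ≤ p.1 := Nat.pos_of_ne_zero fun h => by simp [h] at hpn; omega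
  have hp2 : 1 ≤ p.2 := Nat.pos_of_ne_zero fun h => by simp [h] at hpn; omega
  rw [tauM_eq_zeta_pow j p.1 hp1, tauM_eq_zeta_pow k p.2 hp2]

def pprod {k : ℕ} (f : Fin k → ℕ) (t : ℕ) : ℕ :=
  ∏ j ∈ Finset.range t, (if h : j < k then f ⟨j, h⟩ else 1)

lemma pprod_k {k : ℕ} (f : Fin k → ℕ) : pprod f k = ∏ i, f i := by
  rw [pprod, ← Fin.prod_univ_eq_prod_range]
  exact Finset.prod_congr rfl fun i _ => by simp [i.isLt]

lemma pprod_succ' {k : ℕ} (f : Fin k → ℕ) (i : Fin k) :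
    pprod f (i + 1) = pprod f i * f i := by
  rw [pprod, pprod, Finset.prod_range_succ, dif_pos i.isLt, Fin.eta]

lemma pprod_dvd_succ {k : ℕ} (f : Fin k → ℕ) (t : ℕ) :
    pprod f t ∣ pprod f (t + 1) := by
  rw [pprod, pprod, Finset.prod_range_succ]
  exact Dvd.intro _ rfl

/-- the "part of `a` inside `f i`" -/

def gpart (a : ℕ) {k : ℕ} (f : Fin k → ℕ) (i : Fin k) : ℕ :=
  Nat.gcd a (pprod f ((i : ℕ) + 1)) / Nat.gcd a (pprod f (i : ℕ))

lemma gpart_dvd (a : ℕ) (ha : 0 < a) {k : ℕ} (f : Fin k → ℕ) (i : Fin k) :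
    gpart a f i ∣ f i := by
  have hci : 0 < Nat.gcd a (pprod f (i : ℕ)) := Nat.gcd_pos_of_pos_left _ ha
  have hdvd : Nat.gcd a (pprod f (i : ℕ)) ∣ Nat.gcd a (pprod f ((i : ℕ) + 1)) :=
    Nat.gcd_dvd_gcd_of_dvd_right a (pprod_dvd_succ f i)
  obtain ⟨w, hw⟩ := hdvd
  rw [gpart, hw, Nat.mul_div_cancel_left _ hci]
  have h2 : Nat.gcd a (pprod f ((i : ℕ) + 1)) ∣
      Nat.gcd a (pprod f (i : ℕ)) * f i := by
    rw [pprod_succ']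
    exact (Nat.gcd_mul_right_dvd_mul_gcd a _ _).trans
      (mul_dvd_mul_left _ (Nat.gcd_dvd_right a (f i)))
  rw [hw] at h2
  exact (mul_dvd_mul_iff_left hci.ne').mp h2

lemma gpart_pos (a : ℕ) (ha : 0 < a) {k : ℕ} (f : Fin k → ℕ) (i : Fin k) :
    0 < gpart a f i := by
  have hci : 0 < Nat.gcd a (pprod f (i : ℕ)) := Nat.gcd_pos_of_pos_left _ ha
  have hci1 : 0 < Nat.gcd a (pprod f ((i : ℕ) + 1)) := Nat.gcd_pos_of_pos_left _ ha
  have hdvd : Nat.gcd a (pprod f (i : ℕ)) ∣ Nat.gcd a (pprod f ((i : ℕ) + 1)) :=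
    Nat.gcd_dvd_gcd_of_dvd_right a (pprod_dvd_succ f i)
  exact Nat.div_pos (Nat.le_of_dvd hci1 hdvd) hci

lemma gpart_prod (a : ℕ) (ha : 0 < a) {k : ℕ} (f : Fin k → ℕ) :
    ∏ i, gpart a f i = Nat.gcd a (∏ i, f i) := by
  have key : ∀ t, t ≤ k → ∏ j ∈ Finset.range t,
      (Nat.gcd a (pprod f (j + 1)) / Nat.gcd a (pprod f j)) = Nat.gcd a (pprod f t) := by
    intro t ht
    induction t with
    | zero => simp [pprod]
    | succ s ihs =>
      rw [Finset.prod_range_succ, ihs (by omega)]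
      exact Nat.mul_div_cancel'
        (Nat.gcd_dvd_gcd_of_dvd_right a (pprod_dvd_succ f s))
  rw [← pprod_k f, ← key k le_rfl, ← Fin.prod_univ_eq_prod_range]
  rfl

lemma tauM_submul (k a b : ℕ) (ha : 1 ≤ a) (hb : 1 ≤ b) :
    tauM k (a * b) ≤ tauM k a * tauM k b := by
  classical
  have hab : 0 < a * b := Nat.mul_pos ha hb
  rw [tauM, tauM, tauM, ← Finset.card_product, ← Finset.filter_product]
  refine Finset.card_le_card_of_injOn
    (fun f => (gpart a f, fun i => f i / gpart a f i)) ?_ ?_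
  · intro f hf
    simp only [Finset.mem_coe, mem_filter, Fintype.mem_piFinset, mem_Icc] at hf
    obtain ⟨hbox, hprod⟩ := hf
    have hgprod : ∏ i, gpart a f i = a := by
      rw [gpart_prod a ha f, hprod, Nat.gcd_eq_left ⟨b, rfl⟩]
    have hhprod : ∏ i, f i / gpart a f i = b := by
      have : (∏ i, gpart a f i) * (∏ i, f i / gpart a f i) = a * b := by
        rw [← Finset.prod_mul_distrib]
        rw [← hprod]
        exact Finset.prod_congr rfl fun i _ =>
          Nat.mul_div_cancel' (gpart_dvd a ha f i)
      rw [hgprod] at this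
      exact Nat.eq_of_mul_eq_mul_left ha this
    simp only [Finset.mem_coe, mem_filter, Finset.mem_product, Fintype.mem_piFinset, mem_Icc]
    refine ⟨⟨fun i => ⟨gpart_pos a ha f i, ?_⟩, fun i => ⟨?_, ?_⟩⟩, hgprod, hhprod⟩
    · have hd : gpart a f i ∣ ∏ j, gpart a f j :=
        Finset.dvd_prod_of_mem (fun j => gpart a f j) (mem_univ i)
      rw [hgprod] at hd
      exact Nat.le_of_dvd ha hd
    · have hgd := gpart_dvd a ha f i
      have : 0 < f i := (hbox i).1
      exact Nat.div_pos (Nat.le_of_dvd this hgd) (gpart_pos a ha f i)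
    · have hd : f i / gpart a f i ∣ ∏ j, f j / gpart a f j :=
        Finset.dvd_prod_of_mem (fun j => f j / gpart a f j) (mem_univ i)
      rw [hhprod] at hd
      exact Nat.le_of_dvd hb hd
  · intro f hf f' hf' heq
    simp only [Prod.mk.injEq] at heq
    obtain ⟨h1, h2⟩ := heq
    funext i
    have e1 : gpart a f i = gpart a f' i := congrFun h1 i
    have e2 : f i / gpart a f i = f' i / gpart a f' i := congrFun h2 i
    have d1 := gpart_dvd a ha f i
    have d2 := gpart_dvd a ha f' i
    calc f i = gpart a f i * (f i / gpart a f i) := (Nat.mul_div_cancel' d1).symm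
      _ = gpart a f' i * (f' i / gpart a f' i) := by rw [e2, e1]
      _ = f' i := Nat.mul_div_cancel' d2

lemma tau_mul_tauM_le (k n : ℕ) (hn : 1 ≤ n) :
    n.divisors.card * tauM k n ≤ tauM (k + k) n := by
  rw [tauM_add k k n hn]
  have : n.divisors.card * tauM k n = ∑ p ∈ n.divisorsAntidiagonal, tauM k n := by
    rw [Finset.sum_const, smul_eq_mul, ← Nat.map_div_right_divisors, Finset.card_map]
  rw [this]
  refine Finset.sum_le_sum fun p hp => ?_
  obtain ⟨hpn, hn0⟩ := Nat.mem_divisorsAntidiagonal.mp hp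
  have hp1 : 1 ≤ p.1 := Nat.pos_of_ne_zero fun h => by simp [h] at hpn; omega
  have hp2 : 1 ≤ p.2 := Nat.pos_of_ne_zero fun h => by simp [h] at hpn; omega
  calc tauM k n = tauM k (p.1 * p.2) := by rw [hpn]
    _ ≤ tauM k p.1 * tauM k p.2 := tauM_submul k p.1 p.2 hp1 hp2

lemma pointwise_bound (m n : ℕ) (hm : 0 < m) (hn : 1 ≤ n) :
    n.divisors.card ^ 2 * tauM m n ≤ tauM (4 * m) n := by
  have h1 : n.divisors.card * tauM m n ≤ tauM (m + m) n := tau_mul_tauM_le m n hn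
  have h2 : n.divisors.card * tauM (m + m) n ≤ tauM ((m+m) + (m+m)) n :=
    tau_mul_tauM_le (m+m) n hn
  have h4 : (m+m) + (m+m) = 4 * m := by ring
  calc n.divisors.card ^ 2 * tauM m n
      = n.divisors.card * (n.divisors.card * tauM m n) := by ring
    _ ≤ n.divisors.card * tauM (m + m) n := Nat.mul_le_mul_left _ h1
    _ ≤ tauM ((m+m) + (m+m)) n := h2
    _ = tauM (4 * m) n := by rw [h4]

lemma sum_swap_divisors (N : ℕ) (F : ℕ → ℝ) :
    ∑ n ∈ Finset.Icc 1 N, ∑ p ∈ n.divisorsAntidiagonal, F p.2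
      = ∑ d ∈ Finset.Icc 1 N, ∑ e ∈ Finset.Icc 1 (N / d), F e := by
  have keyR : ∀ d ∈ Finset.Icc 1 N,
      (Finset.Icc 1 N).filter (fun e => d * e ≤ N) = Finset.Icc 1 (N / d) := by
    intro d hd
    rw [Finset.mem_Icc] at hd
    ext e
    simp only [Finset.mem_filter, Finset.mem_Icc]
    constructor
    · rintro ⟨⟨h1, h2⟩, h3⟩
      refine ⟨h1, Nat.le_div_iff_mul_le (by omega) |>.mpr ?_⟩
      rw [mul_comm]; exact h3
    · rintro ⟨h1, h2⟩
      have h3 := Nat.le_div_iff_mul_le (k := d) (by omega) |>.mp h2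
      rw [mul_comm] at h3
      have hdN : N / d ≤ N := Nat.div_le_self N d
      exact ⟨⟨h1, by omega⟩, h3⟩
  calc ∑ n ∈ Finset.Icc 1 N, ∑ p ∈ n.divisorsAntidiagonal, F p.2
      = ∑ x ∈ (Finset.Icc 1 N).sigma Nat.divisorsAntidiagonal, F x.snd.2 :=
        Finset.sum_sigma' _ _ _
    _ = ∑ p ∈ (Finset.Icc 1 N ×ˢ Finset.Icc 1 N).filter (fun p => p.1 * p.2 ≤ N),
          F p.2 := by
        refine Finset.sum_nbij' (i := fun x => x.snd)
          (j := fun p => ⟨p.1 * p.2, p⟩) ?_ ?_ ?_ ?_ ?_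
        · rintro ⟨n, p⟩ hx
          simp only [Finset.mem_sigma, Finset.mem_Icc] at hx
          obtain ⟨⟨hn1, hn2⟩, hp⟩ := hx
          obtain ⟨hpn, hn0⟩ := Nat.mem_divisorsAntidiagonal.mp hp
          have hp1 : 1 ≤ p.1 := Nat.pos_of_ne_zero fun h => by simp [h] at hpn; omega
          have hp2 : 1 ≤ p.2 := Nat.pos_of_ne_zero fun h => by simp [h] at hpn; omega
          have hle1 : p.1 ≤ n := Nat.le_of_dvd (by omega) ⟨p.2, hpn.symm⟩
          have hle2 : p.2 ≤ n := Nat.le_of_dvd (by omega) ⟨p.1, by rw [← hpn]; ring⟩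
          simp only [Finset.mem_filter, Finset.mem_product, Finset.mem_Icc]
          exact ⟨⟨⟨hp1, by omega⟩, ⟨hp2, by omega⟩⟩, by omega⟩
        · rintro p hp
          simp only [Finset.mem_filter, Finset.mem_product, Finset.mem_Icc] at hp
          obtain ⟨⟨⟨h1, _⟩, ⟨h2, _⟩⟩, h3⟩ := hp
          simp only [Finset.mem_sigma, Finset.mem_Icc]
          refine ⟨⟨Nat.mul_pos h1 h2, h3⟩, ?_⟩
          rw [Nat.mem_divisorsAntidiagonal]
          exact ⟨rfl, Nat.mul_ne_zero (by omega) (by omega)⟩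
        · rintro ⟨n, p⟩ hx
          simp only [Finset.mem_sigma] at hx
          obtain ⟨hpn, hn0⟩ := Nat.mem_divisorsAntidiagonal.mp hx.2
          subst hpn
          rfl
        · rintro p hp
          rfl
        · rintro ⟨n, p⟩ hx
          rfl
    _ = ∑ p ∈ Finset.Icc 1 N ×ˢ Finset.Icc 1 N,
          if p.1 * p.2 ≤ N then F p.2 else 0 := Finset.sum_filter _ _
    _ = ∑ d ∈ Finset.Icc 1 N, ∑ e ∈ Finset.Icc 1 N,
          if d * e ≤ N then F e else 0 := Finset.sum_product _ _ _
    _ = ∑ d ∈ Finset.Icc 1 N, ∑ e ∈ (Finset.Icc 1 N).filter (fun e => d * e ≤ N),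
          F e := by
        exact Finset.sum_congr rfl fun d _ => (Finset.sum_filter _ _).symm
    _ = ∑ d ∈ Finset.Icc 1 N, ∑ e ∈ Finset.Icc 1 (N / d), F e :=
        Finset.sum_congr rfl fun d hd => by rw [keyR d hd]

lemma tauM_one (n : ℕ) (hn : 1 ≤ n) : tauM 1 n = 1 := by
  rw [tauM_eq_zeta_pow 1 n hn, pow_one, zeta_apply_ne (by omega)]

lemma harmonic_sum_le (N : ℕ) : ∑ d ∈ Finset.Icc 1 N, (d : ℝ)⁻¹ ≤ 1 + Real.log N := by
  have h := harmonic_le_one_add_log N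
  rw [harmonic_eq_sum_Icc] at h
  push_cast at h
  exact h

lemma sum_tauM_le (k : ℕ) : ∀ x : ℝ, 1 ≤ x →
    ∑ n ∈ Finset.Icc 1 ⌊x⌋₊, (tauM (k+1) n : ℝ) ≤ x * (1 + Real.log x) ^ k := by
  induction k with
  | zero =>
    intro x hx
    have : ∀ n ∈ Finset.Icc 1 ⌊x⌋₊, (tauM 1 n : ℝ) = 1 := by
      intro n hn
      rw [Finset.mem_Icc] at hn
      rw [tauM_one n hn.1, Nat.cast_one]
    rw [Finset.sum_congr rfl this, Finset.sum_const, Nat.card_Icc, pow_zero, mul_one]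
    simp only [Nat.add_sub_cancel, nsmul_eq_mul, mul_one]
    exact Nat.floor_le (by linarith : (0:ℝ) ≤ x)
  | succ k ih =>
    intro x hx
    set N := ⌊x⌋₊ with hN
    have hN1 : 1 ≤ N := Nat.le_floor (by exact_mod_cast hx)
    have hx0 : (0 : ℝ) < x := by linarith
    have hlogx : 0 ≤ Real.log x := Real.log_nonneg hx
    have step1 : ∑ n ∈ Finset.Icc 1 N, (tauM (k+2) n : ℝ)
        = ∑ d ∈ Finset.Icc 1 N, ∑ e ∈ Finset.Icc 1 (N / d), (tauM (k+1) e : ℝ) := by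
      rw [← sum_swap_divisors N (fun e => (tauM (k+1) e : ℝ))]
      refine Finset.sum_congr rfl fun n hn => ?_
      rw [Finset.mem_Icc] at hn
      rw [tauM_succ (k+1) n hn.1]
      push_cast
      rfl
    rw [step1]
    have hinner : ∀ d ∈ Finset.Icc 1 N,
        ∑ e ∈ Finset.Icc 1 (N / d), (tauM (k+1) e : ℝ)
          ≤ (x / d) * (1 + Real.log x) ^ k := by
      intro d hd
      rw [Finset.mem_Icc] at hd
      have hd0 : (0 : ℝ) < d := by exact_mod_cast hd.1
      have hdx : (d : ℝ) ≤ x := le_trans (by exact_mod_cast hd.2) (Nat.floor_le hx0.le)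
      have hxd1 : 1 ≤ x / d := (one_le_div hd0).mpr hdx
      have hfloor : N / d = ⌊x / (d : ℝ)⌋₊ := (Nat.floor_div_natCast x d).symm
      calc ∑ e ∈ Finset.Icc 1 (N / d), (tauM (k+1) e : ℝ)
          = ∑ e ∈ Finset.Icc 1 ⌊x / (d : ℝ)⌋₊, (tauM (k+1) e : ℝ) := by rw [hfloor]
        _ ≤ (x / d) * (1 + Real.log (x / d)) ^ k := ih (x / d) hxd1
        _ ≤ (x / d) * (1 + Real.log x) ^ k := by
            refine mul_le_mul_of_nonneg_left ?_ (by positivity)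
            have h0 : 0 ≤ 1 + Real.log (x / d) := by
              have := Real.log_nonneg hxd1
              linarith
            refine pow_le_pow_left₀ h0 ?_ k
            have hd1 : (1 : ℝ) ≤ d := by exact_mod_cast hd.1
            have hdd : x / d ≤ x := by
              rw [div_le_iff₀ hd0]
              nlinarith
            have := Real.log_le_log (by linarith) hdd
            linarith
    have hlogN : Real.log N ≤ Real.log x :=
      Real.log_le_log (by exact_mod_cast hN1) (Nat.floor_le hx0.le)
    calc ∑ d ∈ Finset.Icc 1 N, ∑ e ∈ Finset.Icc 1 (N / d), (tauM (k+1) e : ℝ)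
        ≤ ∑ d ∈ Finset.Icc 1 N, (x / d) * (1 + Real.log x) ^ k :=
          Finset.sum_le_sum hinner
      _ = x * (1 + Real.log x) ^ k * ∑ d ∈ Finset.Icc 1 N, (d : ℝ)⁻¹ := by
          rw [Finset.mul_sum]
          refine Finset.sum_congr rfl fun d _ => ?_
          field_simp
      _ ≤ x * (1 + Real.log x) ^ k * (1 + Real.log N) := by
          refine mul_le_mul_of_nonneg_left (harmonic_sum_le N) ?_
          positivity
      _ ≤ x * (1 + Real.log x) ^ k * (1 + Real.log x) := by
          refine mul_le_mul_of_nonneg_left (by linarith) (by positivity)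
      _ = x * (1 + Real.log x) ^ (k + 1) := by ring


theorem divisor_mean_value (m : ℕ) (hm : 0 < m) :
    ∃ C : ℝ, 0 < C ∧ ∀ N : ℝ, 2 ≤ N →
      ∑ n ∈ Finset.Ioc ⌊N⌋₊ ⌊2 * N⌋₊,
          ((n.divisors.card : ℝ) ^ 2 * (tauM m n : ℝ))
        ≤ C * N * Real.log N ^ (4 * m - 1) := by
  refine ⟨2 * 4 ^ (4 * m - 1), by positivity, ?_⟩
  intro N hN
  have hN0 : (0 : ℝ) < N := by linarith
  have hx1 : (1 : ℝ) ≤ 2 * N := by linarith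
  have hlogN : Real.log 2 ≤ Real.log N := Real.log_le_log (by norm_num) hN
  have hlog2 : (0.6931471803 : ℝ) < Real.log 2 := Real.log_two_gt_d9
  have hlogN0 : 0 < Real.log N := by linarith
  -- step 1: pointwise bound and enlarging the summation range
  have step1 : ∑ n ∈ Finset.Ioc ⌊N⌋₊ ⌊2 * N⌋₊,
        ((n.divisors.card : ℝ) ^ 2 * (tauM m n : ℝ))
      ≤ ∑ n ∈ Finset.Icc 1 ⌊2 * N⌋₊, (tauM (4 * m) n : ℝ) := by
    have hsub : Finset.Ioc ⌊N⌋₊ ⌊2 * N⌋₊ ⊆ Finset.Icc 1 ⌊2 * N⌋₊ := by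
      intro n hn
      rw [Finset.mem_Ioc] at hn
      rw [Finset.mem_Icc]
      exact ⟨by omega, hn.2⟩
    calc ∑ n ∈ Finset.Ioc ⌊N⌋₊ ⌊2 * N⌋₊,
          ((n.divisors.card : ℝ) ^ 2 * (tauM m n : ℝ))
        ≤ ∑ n ∈ Finset.Ioc ⌊N⌋₊ ⌊2 * N⌋₊, (tauM (4 * m) n : ℝ) := by
          refine Finset.sum_le_sum fun n hn => ?_
          rw [Finset.mem_Ioc] at hn
          have hn1 : 1 ≤ n := by omega
          have := pointwise_bound m n hm hn1
          push_cast
          exact_mod_cast this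
      _ ≤ ∑ n ∈ Finset.Icc 1 ⌊2 * N⌋₊, (tauM (4 * m) n : ℝ) :=
          Finset.sum_le_sum_of_subset_of_nonneg hsub
            (fun n _ _ => by positivity)
  -- step 2: the mean value bound with x = 2N
  have h4m : 4 * m - 1 + 1 = 4 * m := by omega
  have step2 : ∑ n ∈ Finset.Icc 1 ⌊2 * N⌋₊, (tauM (4 * m) n : ℝ)
      ≤ (2 * N) * (1 + Real.log (2 * N)) ^ (4 * m - 1) := by
    have := sum_tauM_le (4 * m - 1) (2 * N) hx1
    rwa [h4m] at this
  -- step 3: 1 + log (2N) ≤ 4 log N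
  have hlog2N : Real.log (2 * N) = Real.log 2 + Real.log N :=
    Real.log_mul (by norm_num) (by linarith)
  have step3 : 1 + Real.log (2 * N) ≤ 4 * Real.log N := by
    rw [hlog2N]
    linarith
  have hbase : (0 : ℝ) ≤ 1 + Real.log (2 * N) := by
    have : 0 ≤ Real.log (2 * N) := Real.log_nonneg hx1
    linarith
  calc ∑ n ∈ Finset.Ioc ⌊N⌋₊ ⌊2 * N⌋₊,
        ((n.divisors.card : ℝ) ^ 2 * (tauM m n : ℝ))
      ≤ (2 * N) * (1 + Real.log (2 * N)) ^ (4 * m - 1) := step1.trans step2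
    _ ≤ (2 * N) * (4 * Real.log N) ^ (4 * m - 1) := by
        refine mul_le_mul_of_nonneg_left ?_ (by linarith)
        exact pow_le_pow_left₀ hbase step3 _
    _ = 2 * 4 ^ (4 * m - 1) * N * Real.log N ^ (4 * m - 1) := by
        rw [mul_pow]
        ring
end
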